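/- Let R be a commutative Noetherian ring, n ≥ 1, and C a finitely generated R-module. Let 0 → Y → X →^f M → 0 be a short exact sequence of finitely generated R-modules with X n-C-spherical and Cdim_R Y < n. Then f is a right approximation of M over the class of n-C-spherical modules: for every finitely generated n-C-spherical R-module X′, the map Hom_R(X′, X) → Hom_R(X′, M) induced by composition with f is surjective. In particular, Ext^1_R(X′, Y) = 0 for every finitely generated n-C-spherical R-module X′. -/

import Mathlib

open CategoryTheory

noncomputable def ExtVanishes (A : Type) [CommRing A] (i : ℕ)
    (M : Type) [AddCommGroup M] [Module A M]
    (N : Type) [AddCommGroup N] [Module A N] : Prop :=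
  Subsingleton ((((Ext A (ModuleCat.{0} A) i).obj (Opposite.op (ModuleCat.of A M))).obj
    (ModuleCat.of A N)))

noncomputable def ExtMod (A : Type) [CommRing A] (i : ℕ)
    (M : Type) [AddCommGroup M] [Module A M]
    (N : Type) [AddCommGroup N] [Module A N] : ModuleCat.{0} A :=
  ((Ext A (ModuleCat.{0} A) i).obj (Opposite.op (ModuleCat.of A M))).obj (ModuleCat.of A N)

noncomputable def evalMap (A : Type) [CommRing A]
    (C : Type) [AddCommGroup C] [Module A C]
    (M : Type) [AddCommGroup M] [Module A M] :
    M →ₗ[A] ((M →ₗ[A] C) →ₗ[A] C) :=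
  LinearMap.applyₗ

/-- `M` is `n`-`C`-torsionfree. (`n = 0` imposes no condition.) -/
noncomputable def IsCTorsionfree (A : Type) [CommRing A]
    (C : Type) [AddCommGroup C] [Module A C]
    (M : Type) [AddCommGroup M] [Module A M] : ℕ → Prop
  | 0 => True
  | 1 => Function.Injective (evalMap A C M)
  | (m + 2) => Function.Bijective (evalMap A C M) ∧
      ∀ i : ℕ, 1 ≤ i → i ≤ m → ExtVanishes A i (M →ₗ[A] C) C

/-- `C` is an `n`-semidualizing `A`-module. -/
noncomputable def IsSemidualizing (A : Type) [CommRing A]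
    (C : Type) [AddCommGroup C] [Module A C] : ℕ → Prop
  | 0 => True
  | 1 => Function.Injective (LinearMap.lsmul A C) ∧ ExtVanishes A 1 C C
  | (m + 2) => Function.Bijective (LinearMap.lsmul A C) ∧
      ∀ i : ℕ, 1 ≤ i → i ≤ m + 2 → ExtVanishes A i C C

/-- `M` is `n`-`C`-spherical: `Ext^i(M,C) = 0` for `1 ≤ i ≤ n`. -/
noncomputable def IsCSpherical (A : Type) [CommRing A]
    (C : Type) [AddCommGroup C] [Module A C]
    (M : Type) [AddCommGroup M] [Module A M] (n : ℕ) : Prop :=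
  ∀ i : ℕ, 1 ≤ i → i ≤ n → ExtVanishes A i M C

/-- `X` belongs to `add C`: it is a direct summand of a finite direct sum of copies of `C`. -/
def MemAddC (A : Type) [CommRing A]
    (C : Type) [AddCommGroup C] [Module A C]
    (X : Type) [AddCommGroup X] [Module A X] : Prop :=
  ∃ (k : ℕ) (f : X →ₗ[A] (Fin k → C)) (g : (Fin k → C) →ₗ[A] X),
    g.comp f = LinearMap.id

/-- There is an exact sequence `0 → D_m → ⋯ → D_0 → M → 0` with all `D_i ∈ add C`. -/
noncomputable def HasCResolution (A : Type) [CommRing A]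
    (C : Type) [AddCommGroup C] [Module A C]
    (M : Type) [AddCommGroup M] [Module A M] (m : ℕ) : Prop :=
  ∃ (D : ℕ → ModuleCat.{0} A) (d : ∀ i : ℕ, (D (i + 1)) →ₗ[A] (D i)) (ε : (D 0) →ₗ[A] M),
    (∀ i : ℕ, i ≤ m → MemAddC A C (D i)) ∧
    (∀ i : ℕ, m < i → Subsingleton (D i)) ∧
    Function.Surjective ε ∧ Function.Exact (d 0) ε ∧
    (∀ i : ℕ, Function.Exact (d (i + 1)) (d i))

/-- `Cdim_A M`, the `add C`-resolution dimension of `M`, as an extended natural number. -/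
noncomputable def cdim (A : Type) [CommRing A]
    (C : Type) [AddCommGroup C] [Module A C]
    (M : Type) [AddCommGroup M] [Module A M] : ℕ∞ :=
  sInf ((fun m : ℕ => (m : ℕ∞)) '' {m : ℕ | HasCResolution A C M m})

/-- `K` is a first syzygy of `M`: there is a short exact sequence `0 → K → P → M → 0`
with `P` finitely generated projective. -/
def IsFirstSyzygy (A : Type) [CommRing A] (K M : ModuleCat.{0} A) : Prop :=
  ∃ (P : ModuleCat.{0} A) (ι : K →ₗ[A] P) (ε : P →ₗ[A] M),
    Module.Finite A P ∧ Module.Projective A P ∧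
    Function.Injective ι ∧ Function.Exact ι ε ∧ Function.Surjective ε

/-- `K` is an `n`-th syzygy of `M`. -/
def IsNthSyzygy (A : Type) [CommRing A] : ℕ → ModuleCat.{0} A → ModuleCat.{0} A → Prop
  | 0, K, M => Nonempty (K ≃ₗ[A] M)
  | (n + 1), K, M => ∃ L : ModuleCat.{0} A, IsFirstSyzygy A K L ∧ IsNthSyzygy A n L M

/-- Depth of a module over a Noetherian local ring:
`inf { i | Ext^i(k, N) ≠ 0 }`, as an extended natural number. -/
noncomputable def rdepth (A : Type) [CommRing A] [IsLocalRing A]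
    (N : Type) [AddCommGroup N] [Module A N] : ℕ∞ :=
  sInf ((fun i : ℕ => (i : ℕ∞)) ''
    {i : ℕ | ¬ ExtVanishes A i (IsLocalRing.ResidueField A) N})

/-- `N` has finite injective dimension over `A`: it admits a finite injective coresolution. -/
noncomputable def HasFiniteInjDim (A : Type) [CommRing A]
    (N : Type) [AddCommGroup N] [Module A N] : Prop :=
  ∃ (m : ℕ) (D : ℕ → ModuleCat.{0} A) (δ : ∀ i : ℕ, (D i) →ₗ[A] (D (i + 1)))
    (η : N →ₗ[A] (D 0)),
    (∀ i : ℕ, i ≤ m → Module.Injective A (D i)) ∧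
    (∀ i : ℕ, m < i → Subsingleton (D i)) ∧
    Function.Injective η ∧ Function.Exact η (δ 0) ∧
    (∀ i : ℕ, Function.Exact (δ i) (δ (i + 1)))

/-- `N` has finite projective dimension over `A`: it admits a finite projective resolution. -/
noncomputable def HasFiniteProjDim (A : Type) [CommRing A]
    (N : Type) [AddCommGroup N] [Module A N] : Prop :=
  ∃ (m : ℕ) (D : ℕ → ModuleCat.{0} A) (d : ∀ i : ℕ, (D (i + 1)) →ₗ[A] (D i))
    (ε : (D 0) →ₗ[A] N),
    (∀ i : ℕ, i ≤ m → Module.Projective A (D i)) ∧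
    (∀ i : ℕ, m < i → Subsingleton (D i)) ∧
    Function.Surjective ε ∧ Function.Exact (d 0) ε ∧
    (∀ i : ℕ, Function.Exact (d (i + 1)) (d i))

/-- A regular local ring: a Noetherian local ring whose maximal ideal can be generated by
(Krull dimension)-many elements. -/
def IsRegularLocal (A : Type) [CommRing A] [IsLocalRing A] : Prop :=
  IsNoetherianRing A ∧ ∃ s : Finset A,
    Ideal.span (s : Set A) = IsLocalRing.maximalIdeal A ∧
    (s.card : WithBot ℕ∞) = ringKrullDim A

/-- `M` admits an `n`-`C`-spherical approximation: a short exact sequence `0 → Y → X → M → 0`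
with `X` finitely generated `n`-`C`-spherical and `Cdim Y < n`. -/
noncomputable def HasSphericalApprox (A : Type) [CommRing A]
    (C : Type) [AddCommGroup C] [Module A C]
    (M : Type) [AddCommGroup M] [Module A M] (n : ℕ) : Prop :=
  ∃ (X Y : ModuleCat.{0} A) (ι : ↥Y →ₗ[A] ↥X) (f : ↥X →ₗ[A] M),
    Module.Finite A ↥X ∧ Module.Finite A ↥Y ∧
    Function.Injective ι ∧ Function.Exact ι f ∧ Function.Surjective f ∧
    IsCSpherical A C ↥X n ∧ cdim A C ↥Y < (n : ℕ∞)


section AuxStatement18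

variable {R : Type} [CommRing R]

/-- Concrete exactness of the Hom complex `Hom(P, W)` at degree `j+1`. -/
def GoodAt {X' : ModuleCat.{0} R} (P : ProjectiveResolution X') (W : ModuleCat.{0} R)
    (j : ℕ) : Prop :=
  ∀ v : (P.complex.X (j+1) : Type) →ₗ[R] W, v.comp (P.complex.d (j+2) (j+1)).hom = 0 →
    ∃ w : (P.complex.X j : Type) →ₗ[R] W, w.comp (P.complex.d (j+1) j).hom = v

lemma subsingleton_iff_isZero (M : ModuleCat.{0} R) : Subsingleton M ↔ Limits.IsZero M := by
  constructor
  · intro h; exact ModuleCat.isZero_of_subsingleton M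
  · intro h
    refine ⟨fun a b => ?_⟩
    have : (𝟙 M : M ⟶ M) = 0 := h.eq_of_src _ _
    calc a = (𝟙 M : M ⟶ M) a := rfl
    _ = (0 : M ⟶ M) a := by rw [this]
    _ = (𝟙 M : M ⟶ M) b := by rw [this]; rfl
    _ = b := rfl

lemma bridge (X'T N : Type) [AddCommGroup X'T] [Module R X'T] [AddCommGroup N] [Module R N]
    (P : ProjectiveResolution (ModuleCat.of R X'T)) (j : ℕ) :
    ExtVanishes R (j+1) X'T N ↔ GoodAt P (ModuleCat.of R N) j := by
  rw [ExtVanishes]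
  rw [(Equiv.subsingleton_congr (P.isoExt (j+1) (ModuleCat.of R N)).toLinearEquiv.toEquiv)]
  rw [subsingleton_iff_isZero]
  rw [← HomologicalComplex.exactAt_iff_isZero_homology]
  rw [HomologicalComplex.exactAt_iff' _ j (j+1) (j+2)
    (by simp) (by simp)]
  rw [ShortComplex.moduleCat_exact_iff]
  constructor
  · intro h v hv
    obtain ⟨w, hw⟩ := h (ModuleCat.ofHom v) (by
      have : (((P.complex.linearYonedaObj R (ModuleCat.of R N)).sc' j (j+1) (j+2)).g)
          (ModuleCat.ofHom v) = P.complex.d (j+2) (j+1) ≫ ModuleCat.ofHom v := rfl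
      rw [this]
      exact ModuleCat.hom_ext hv)
    exact ⟨w.hom, congrArg ModuleCat.Hom.hom hw⟩
  · intro h v hv
    obtain ⟨w, hw⟩ := h v.hom (congrArg ModuleCat.Hom.hom hv)
    exact ⟨ModuleCat.ofHom w, ModuleCat.hom_ext hw⟩

lemma factorThruKer {A B W T : Type} [AddCommGroup A] [Module R A] [AddCommGroup B] [Module R B]
    [AddCommGroup W] [Module R W] [AddCommGroup T] [Module R T]
    (ι : A →ₗ[R] B) (π : B →ₗ[R] W) (hι : Function.Injective ι)
    (hex : Function.Exact ι π) (u : T →ₗ[R] B) (hu : π.comp u = 0) :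
    ∃ a : T →ₗ[R] A, ι.comp a = u := by
  have hmem : ∀ t : T, u t ∈ LinearMap.range ι := by
    intro t
    have : π (u t) = 0 := congrFun (congrArg DFunLike.coe hu) t
    obtain ⟨x, hx⟩ := (hex (u t)).mp this
    exact ⟨x, hx⟩
  let e := LinearEquiv.ofInjective ι hι
  refine ⟨e.symm.toLinearMap.comp (u.codRestrict (LinearMap.range ι) hmem), ?_⟩
  ext t
  have : ι (e.symm ⟨u t, hmem t⟩) = (⟨u t, hmem t⟩ : LinearMap.range ι) := by
    rw [← LinearEquiv.ofInjective_apply ι (h := hι), LinearEquiv.apply_symm_apply]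
  exact this

lemma factorThruCoker {B W T N : Type} [AddCommGroup B] [Module R B] [AddCommGroup W] [Module R W]
    [AddCommGroup T] [Module R T] [AddCommGroup N] [Module R N]
    (d : T →ₗ[R] B) (ε : B →ₗ[R] W) (hε : Function.Surjective ε)
    (hex : Function.Exact d ε) (u : B →ₗ[R] N) (hu : u.comp d = 0) :
    ∃ h : W →ₗ[R] N, h.comp ε = u := by
  have hle : LinearMap.ker ε ≤ LinearMap.ker u := by
    intro x hx
    obtain ⟨t, ht⟩ := (hex x).mp hx
    have : u x = u (d t) := by rw [ht]
    simp only [LinearMap.mem_ker, this]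
    exact congrFun (congrArg DFunLike.coe hu) t
  let e := LinearMap.quotKerEquivOfSurjective ε hε
  refine ⟨(Submodule.liftQ _ u hle).comp e.symm.toLinearMap, ?_⟩
  ext x
  have h1 : e.symm (ε x) = Submodule.Quotient.mk x := by
    apply e.injective
    rw [LinearEquiv.apply_symm_apply]
    rfl
  simp only [LinearMap.coe_comp, Function.comp_apply, LinearEquiv.coe_coe, h1]
  rfl

lemma goodAt_of_subsingleton {X' : ModuleCat.{0} R} (P : ProjectiveResolution X')
    (W : ModuleCat.{0} R) [Subsingleton W] (j : ℕ) : GoodAt P W j := by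
  intro v _
  exact ⟨0, by ext x; exact Subsingleton.elim _ _⟩

lemma goodAt_shift {X' : ModuleCat.{0} R} (P : ProjectiveResolution X')
    {A B W : ModuleCat.{0} R} (ι : A ⟶ B) (π : B ⟶ W)
    (hι : Function.Injective ι) (hex : Function.Exact ι π) (hπ : Function.Surjective π)
    (j : ℕ) (hB : GoodAt P B j) (hA : GoodAt P A (j+1)) : GoodAt P W j := by
  intro v hv
  haveI : Epi π := (ModuleCat.epi_iff_surjective π).2 hπ
  haveI := P.projective (j+1)
  set u : P.complex.X (j+1) ⟶ B := Projective.factorThru (ModuleCat.ofHom v) π with hudef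
  have hu : u ≫ π = ModuleCat.ofHom v := Projective.factorThru_comp _ π
  have hu' : LinearMap.comp π.hom u.hom = v := congrArg ModuleCat.Hom.hom hu
  have h1 : LinearMap.comp π.hom (u.hom.comp (P.complex.d (j+2) (j+1)).hom) = 0 := by
    rw [← LinearMap.comp_assoc, hu', hv]
  obtain ⟨a, ha⟩ := factorThruKer ι.hom π.hom hι hex _ h1
  have hdd : (P.complex.d (j+2) (j+1)).hom.comp (P.complex.d (j+3) (j+2)).hom = (0 : _) := by
    have := congrArg ModuleCat.Hom.hom (P.complex.d_comp_d (j+3) (j+2) (j+1))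
    exact this
  have ha2 : a.comp (P.complex.d (j+3) (j+2)).hom = 0 := by
    have : LinearMap.comp ι.hom (a.comp (P.complex.d (j+3) (j+2)).hom) = 0 := by
      rw [← LinearMap.comp_assoc, ha, LinearMap.comp_assoc, hdd, LinearMap.comp_zero]
    ext x
    apply hι
    have := congrFun (congrArg DFunLike.coe this) x
    simpa using this
  obtain ⟨b, hb⟩ := hA a ha2
  have h3 : (u.hom - LinearMap.comp ι.hom b).comp (P.complex.d (j+2) (j+1)).hom = 0 := by
    rw [LinearMap.sub_comp, LinearMap.comp_assoc, hb, ha, sub_self]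
  obtain ⟨c, hc⟩ := hB (u.hom - LinearMap.comp ι.hom b) h3
  refine ⟨LinearMap.comp π.hom c, ?_⟩
  have hπι : LinearMap.comp π.hom ι.hom = 0 := by
    ext x
    simpa using (hex (ι x)).mpr ⟨x, rfl⟩
  rw [LinearMap.comp_assoc, hc, LinearMap.comp_sub, hu', ← LinearMap.comp_assoc, hπι]
  simp

lemma goodAt_of_summand {X' : ModuleCat.{0} R} (P : ProjectiveResolution X')
    {CT : Type} [AddCommGroup CT] [Module R CT]
    {D : ModuleCat.{0} R} (k : ℕ) (f : D →ₗ[R] (Fin k → CT)) (g : (Fin k → CT) →ₗ[R] D)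
    (hgf : g.comp f = LinearMap.id) (j : ℕ)
    (hC : GoodAt P (ModuleCat.of R CT) j) : GoodAt P D j := by
  intro v hv
  have hcoc : ∀ t : Fin k,
      ((LinearMap.proj t).comp (f.comp v)).comp
        (P.complex.d (j+2) (j+1)).hom = 0 := by
    intro t
    ext x
    have h0 : v (P.complex.d (j+2) (j+1) x) = 0 := congrFun (congrArg DFunLike.coe hv) x
    simp [h0]
  choose w hw using fun t : Fin k => hC
    ((LinearMap.proj t).comp (f.comp v)) (hcoc t)
  refine ⟨g.comp (LinearMap.pi w), ?_⟩
  ext x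
  have h1 : ∀ t : Fin k, w t (P.complex.d (j+1) j x) = f (v x) t := by
    intro t
    have := congrFun (congrArg DFunLike.coe (hw t)) x
    simpa using this
  have h2 : (LinearMap.pi w) (P.complex.d (j+1) j x) = f (v x) := funext h1
  have h3 : g (f (v x)) = v x := congrFun (congrArg DFunLike.coe hgf) (v x)
  show g ((LinearMap.pi w) ((P.complex.d (j + 1) j) x)) = v x
  rw [h2, h3]

end AuxStatement18


lemma goodAt_of_resolution {R : Type} [CommRing R] {X'M : ModuleCat.{0} R}
    (P : ProjectiveResolution X'M)
    (CT : Type) [AddCommGroup CT] [Module R CT]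
    (YT : Type) [AddCommGroup YT] [Module R YT]
    (n m : ℕ) (hmn : m < n) (hres : HasCResolution R CT YT m)
    (hC : ∀ j : ℕ, j + 1 ≤ n → GoodAt P (ModuleCat.of R CT) j) :
    GoodAt P (ModuleCat.of R YT) 0 := by
  obtain ⟨D, d, ε, hadd, hsub, hεs, hex0, hexs⟩ := hres
  let Z : ℕ → ModuleCat.{0} R := fun k => match k with
    | 0 => ModuleCat.of R YT
    | (k+1) => ModuleCat.of R ↥(LinearMap.range (d k))
  let pi : ∀ k, ((D k : Type) →ₗ[R] (Z k : Type)) := fun k => match k with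
    | 0 => ε
    | (k+1) => (d k).rangeRestrict
  let ii : ∀ k, ((Z (k+1) : Type) →ₗ[R] (D k : Type)) := fun k => (LinearMap.range (d k)).subtype
  have hpis : ∀ k, Function.Surjective (pi k) := by
    intro k
    cases k with
    | zero => exact hεs
    | succ k => exact (d k).surjective_rangeRestrict
  have hiinj : ∀ k, Function.Injective (ii k) := fun k => Submodule.injective_subtype _
  have hexk : ∀ k, Function.Exact (ii k) (pi k) := by
    intro k
    cases k with
    | zero =>
      intro y
      constructor
      · intro hy
        obtain ⟨x, hx⟩ := (hex0 y).mp hy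
        exact ⟨⟨y, ⟨x, hx⟩⟩, rfl⟩
      · rintro ⟨⟨z, ⟨x, hx⟩⟩, rfl⟩
        exact (hex0 z).mpr ⟨x, hx⟩
    | succ k =>
      intro y
      constructor
      · intro hy
        have : d k y = 0 := congrArg (Subtype.val) hy
        obtain ⟨x, hx⟩ := (hexs k y).mp this
        exact ⟨⟨y, ⟨x, hx⟩⟩, rfl⟩
      · rintro ⟨⟨z, ⟨x, hx⟩⟩, rfl⟩
        apply Subtype.ext
        show d k z = 0
        exact (hexs k z).mpr ⟨x, hx⟩
  have key : ∀ s k j, k + s = m + 1 → j + s ≤ n → GoodAt P (Z k) j := by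
    intro s
    induction s with
    | zero =>
      intro k j hk _
      have hk' : k = m + 1 := by omega
      subst hk'
      haveI : Subsingleton (D (m+1) : Type) := hsub (m+1) (by omega)
      haveI : Subsingleton ((Z (m+1) : Type)) := by
        refine ⟨fun a b => Subtype.ext ?_⟩
        obtain ⟨x, hx⟩ := a.2
        obtain ⟨y, hy⟩ := b.2
        rw [← hx, ← hy, Subsingleton.elim x y]
      exact goodAt_of_subsingleton P (Z (m+1)) j
    | succ s ih =>
      intro k j hk hj
      exact goodAt_shift P (show Z (k+1) ⟶ D k from ModuleCat.ofHom (ii k))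
        (show D k ⟶ Z k from ModuleCat.ofHom (pi k))
        (hiinj k) (hexk k) (hpis k) j
        (by
          obtain ⟨k', f, g, hgf⟩ := hadd k (by omega)
          exact goodAt_of_summand P k' f g hgf j (hC j (by omega)))
        (ih (k+1) (j+1) (by omega) (by omega))
  exact key (m+1) 0 0 (by omega) (by omega)

/-- Let `0 → Y → X → M → 0` be exact with `X` `n`-`C`-spherical and `Cdim_R Y < n`. Then
`f : X → M` is a right approximation of `M` over the class of `n`-`C`-spherical modules, and
`Ext^1_R(X', Y) = 0` for every finitely generated `n`-`C`-spherical module `X'`. -/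
theorem statement18 (R : Type) [CommRing R] [IsNoetherianRing R]
    (n : ℕ) (hn : 1 ≤ n)
    (C : Type) [AddCommGroup C] [Module R C] [Module.Finite R C]
    (Y : Type) [AddCommGroup Y] [Module R Y] [Module.Finite R Y]
    (X : Type) [AddCommGroup X] [Module R X] [Module.Finite R X]
    (M : Type) [AddCommGroup M] [Module R M] [Module.Finite R M]
    (ι : Y →ₗ[R] X) (f : X →ₗ[R] M)
    (hι : Function.Injective ι) (hexact : Function.Exact ι f) (hf : Function.Surjective f)
    (hX : IsCSpherical R C X n) (hY : cdim R C Y < (n : ℕ∞)) :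
    (∀ (X' : Type) [AddCommGroup X'] [Module R X'] [Module.Finite R X'],
      IsCSpherical R C X' n →
      Function.Surjective (fun g : X' →ₗ[R] X => f.comp g)) ∧
    (∀ (X' : Type) [AddCommGroup X'] [Module R X'] [Module.Finite R X'],
      IsCSpherical R C X' n → ExtVanishes R 1 X' Y) := by
  obtain ⟨mval, hmres, hmlt⟩ : ∃ m, HasCResolution R C Y m ∧ (m : ℕ∞) < (n : ℕ∞) := by
    rw [cdim, sInf_lt_iff] at hY
    obtain ⟨a, ⟨m, hm, rfl⟩, hlt⟩ := hY
    exact ⟨m, hm, hlt⟩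
  have hmn : mval < n := by exact_mod_cast hmlt
  have main : ∀ (X' : Type) [AddCommGroup X'] [Module R X'], IsCSpherical R C X' n →
      ∀ (P : ProjectiveResolution (ModuleCat.of R X')), GoodAt P (ModuleCat.of R Y) 0 := by
    intro X' _ _ hsph P
    refine goodAt_of_resolution P C Y n mval hmn hmres ?_
    intro j hj
    exact (bridge X' C P j).mp (hsph (j+1) (by omega) hj)
  constructor
  · intro X' _ _ _ hsph g
    obtain ⟨P⟩ : Nonempty (ProjectiveResolution (ModuleCat.of R X')) :=
      HasProjectiveResolution.out
    have hY0 : GoodAt P (ModuleCat.of R Y) 0 := main X' hsph P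
    haveI := P.projective 0
    set ε : P.complex.X 0 ⟶ ModuleCat.of R X' := P.π.f 0 with hεdef
    set d0 := P.complex.d 1 0 with hd0def
    set d1 := P.complex.d 2 1 with hd1def
    have hεs : Function.Surjective ε := (ModuleCat.epi_iff_surjective (P.π.f 0)).1 inferInstance
    have hεd0 : LinearMap.comp ε.hom d0.hom = 0 :=
      congrArg ModuleCat.Hom.hom P.complex_d_comp_π_f_zero
    have hexd0 : Function.Exact d0.hom ε.hom := by
      intro y
      constructor
      · intro hy
        have := (ShortComplex.moduleCat_exact_iff _).1 P.exact₀ y hy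
        obtain ⟨x, hx⟩ := this
        exact ⟨x, hx⟩
      · rintro ⟨x, rfl⟩
        exact congrFun (congrArg DFunLike.coe hεd0) x
    haveI : Epi (ModuleCat.ofHom f) := (ModuleCat.epi_iff_surjective _).2 hf
    set u : P.complex.X 0 ⟶ ModuleCat.of R X :=
      Projective.factorThru (show P.complex.X 0 ⟶ ModuleCat.of R M from
        ModuleCat.ofHom (g.comp ε.hom))
        (ModuleCat.ofHom f) with hudef
    have hu : u ≫ ModuleCat.ofHom f = (show P.complex.X 0 ⟶ ModuleCat.of R M from
        ModuleCat.ofHom (g.comp ε.hom)) :=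
      Projective.factorThru_comp _ _
    have hu' : f.comp u.hom = g.comp ε.hom := congrArg ModuleCat.Hom.hom hu
    have h1 : f.comp (u.hom.comp d0.hom) = 0 := by
      rw [← LinearMap.comp_assoc, hu', LinearMap.comp_assoc, hεd0, LinearMap.comp_zero]
    obtain ⟨a, ha⟩ := factorThruKer ι f hι hexact _ h1
    have hdd : d0.hom.comp d1.hom = 0 :=
      congrArg ModuleCat.Hom.hom (P.complex.d_comp_d 2 1 0)
    have ha2 : a.comp d1.hom = 0 := by
      have h5 : LinearMap.comp ι (a.comp d1.hom) = 0 := by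
        rw [← LinearMap.comp_assoc, ha, LinearMap.comp_assoc, hdd, LinearMap.comp_zero]
      ext x
      apply hι
      have := congrFun (congrArg DFunLike.coe h5) x
      simpa using this
    obtain ⟨b, hb⟩ := hY0 a ha2
    set uL := (show ((P.complex.X 0 : Type)) →ₗ[R] X from u.hom) with huL
    set bL := (show ((P.complex.X 0 : Type)) →ₗ[R] Y from b) with hbL
    have hb' : bL.comp d0.hom = a := hb
    have hu2 : f.comp uL = g.comp ε.hom := hu'
    have hu'd : (uL - ι.comp bL).comp d0.hom = 0 := by
      rw [LinearMap.sub_comp, LinearMap.comp_assoc, hb', ha, sub_self]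
    obtain ⟨h, hh⟩ := factorThruCoker d0.hom ε.hom hεs hexd0 _ hu'd
    refine ⟨h, ?_⟩
    show f.comp h = g
    ext z
    obtain ⟨x, rfl⟩ := hεs z
    have h6 : h (ε x) = uL x - ι (bL x) := congrFun (congrArg DFunLike.coe hh) x
    have h7 : f (uL x) = g (ε x) := congrFun (congrArg DFunLike.coe hu2) x
    have h8 : f (ι (bL x)) = 0 := (hexact (ι (bL x))).mpr ⟨bL x, rfl⟩
    show f (h (ε x)) = g (ε x)
    rw [h6, map_sub, h7, h8, sub_zero]
  · intro X' _ _ _ hsph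
    obtain ⟨P⟩ : Nonempty (ProjectiveResolution (ModuleCat.of R X')) :=
      HasProjectiveResolution.out
    exact (bridge X' Y P 0).mpr (main X' hsph P)
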